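/- Let n ≥ 1, let q₁, …, q_m ∈ ℂ[x₁,…,xₙ] be nonconstant irreducible polynomials, and let p ∈ ℂ[x₁,…,xₙ] be a nonconstant polynomial whose zero set V(p) is a finite union of finite intersections of sets each of which is an allowable hyperplane Z_i, S_{ij}, D_{ij} or one of the hypersurfaces V(q_l). Then V(p) is a simple finite union of such sets: V(p) = W₁ ∪ ⋯ ∪ W_s, where each W_r is itself one of the hyperplanes Z_i, S_{ij}, D_{ij} or one of the hypersurfaces V(q_l) (no nontrivial intersections occur). -/

import Mathlib

open MvPolynomial


/-- A basic set for black-box arithmetic: an allowable hyperplane `{x_i = 0}`,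
`{x_i + x_j = 0}`, `{x_i - x_j = 0}`, or the zero set of one of the black-box
polynomials `q l`. -/
def IsBasicQSet (n m : ℕ) (q : Fin m → MvPolynomial (Fin n) ℂ)
    (W : Set (Fin n → ℂ)) : Prop :=
  (∃ i : Fin n, W = {x | x i = 0}) ∨
  (∃ i j : Fin n, i ≠ j ∧ W = {x | x i + x j = 0}) ∨
  (∃ i j : Fin n, i ≠ j ∧ W = {x | x i - x j = 0}) ∨
  (∃ l : Fin m, W = {x | MvPolynomial.eval x (q l) = 0})

/-- The algebra equivalence singling out the variable `i`. -/
private noncomputable def toPolyAux {n : ℕ} (i : Fin n) :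
    MvPolynomial (Fin n) ℂ ≃ₐ[ℂ] Polynomial (MvPolynomial {b : Fin n // b ≠ i} ℂ) :=
  (renameEquiv ℂ (Equiv.optionSubtypeNe i).symm).trans
    (optionEquivLeft ℂ {b : Fin n // b ≠ i})

private lemma toPolyAux_X_self {n : ℕ} (i : Fin n) :
    toPolyAux i (X i) = Polynomial.X := by
  simp [toPolyAux, renameEquiv_apply, rename_X, Equiv.optionSubtypeNe_symm_self,
    optionEquivLeft_X_none]

private lemma toPolyAux_X_ne {n : ℕ} {i j : Fin n} (h : j ≠ i) :
    toPolyAux i (X j) = Polynomial.C (X ⟨j, h⟩) := by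
  simp [toPolyAux, renameEquiv_apply, rename_X, Equiv.optionSubtypeNe_symm_of_ne h,
    optionEquivLeft_X_some]

private lemma prime_X_mv {n : ℕ} (i : Fin n) : Prime (X i : MvPolynomial (Fin n) ℂ) := by
  rw [← MulEquiv.prime_iff (toPolyAux i).toMulEquiv]
  show Prime (toPolyAux i (X i))
  rw [toPolyAux_X_self]
  exact Polynomial.prime_X

private lemma prime_X_add_X {n : ℕ} {i j : Fin n} (h : i ≠ j) :
    Prime (X i + X j : MvPolynomial (Fin n) ℂ) := by
  rw [← MulEquiv.prime_iff (toPolyAux i).toMulEquiv]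
  show Prime (toPolyAux i (X i + X j))
  rw [map_add, toPolyAux_X_self, toPolyAux_X_ne (Ne.symm h)]
  have := Polynomial.prime_X_sub_C (-(X ⟨j, Ne.symm h⟩ : MvPolynomial {b : Fin n // b ≠ i} ℂ))
  simpa [sub_neg_eq_add] using this

private lemma prime_X_sub_X {n : ℕ} {i j : Fin n} (h : i ≠ j) :
    Prime (X i - X j : MvPolynomial (Fin n) ℂ) := by
  rw [← MulEquiv.prime_iff (toPolyAux i).toMulEquiv]
  show Prime (toPolyAux i (X i - X j))
  rw [map_sub, toPolyAux_X_self, toPolyAux_X_ne (Ne.symm h)]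
  exact Polynomial.prime_X_sub_C _

private lemma zeroset_eq_of_dvd_irred {n : ℕ} {f h : MvPolynomial (Fin n) ℂ}
    (hh : Irreducible h) (hf : ¬ IsUnit f) (hd : f ∣ h) :
    {x : Fin n → ℂ | eval x f = 0} = {x | eval x h = 0} := by
  obtain ⟨c, rfl⟩ := hd
  rcases hh.isUnit_or_isUnit rfl with h1 | h1
  · exact absurd h1 hf
  · ext x
    have hu : IsUnit (eval x c) := h1.map (eval x)
    simp [mul_eq_zero, hu.ne_zero]

private lemma dvd_of_zeroset_subset {n : ℕ} {f g : MvPolynomial (Fin n) ℂ}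
    (hf : Prime f)
    (hsub : {x : Fin n → ℂ | eval x f = 0} ⊆ {x | eval x g = 0}) : f ∣ g := by
  have hmem : g ∈ vanishingIdeal ℂ (zeroLocus ℂ (Ideal.span {f})) := by
    rw [mem_vanishingIdeal_iff]
    intro x hx
    exact hsub (hx f (Ideal.mem_span_singleton_self f))
  rw [vanishingIdeal_zeroLocus_eq_radical] at hmem
  have hprime : (Ideal.span {f}).IsPrime := (Ideal.span_singleton_prime hf.ne_zero).mpr hf
  rw [hprime.radical] at hmem
  exact Ideal.mem_span_singleton.mp hmem


/-- If the variety of a nonconstant complex polynomial `p` is a finite union of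
finite intersections of allowable hyperplanes and hypersurfaces `V(q_l)` (the `q_l` being
nonconstant irreducible), then it is a simple finite union of such sets. -/
theorem stmt_18 (n m : ℕ) (hn : 1 ≤ n)
    (q : Fin m → MvPolynomial (Fin n) ℂ)
    (hq : ∀ l, 0 < (q l).totalDegree ∧ Irreducible (q l))
    (p : MvPolynomial (Fin n) ℂ) (hp : 0 < p.totalDegree)
    (K : ℕ) (r : Fin K → ℕ) (H : (i : Fin K) → Fin (r i) → Set (Fin n → ℂ))
    (hH : ∀ i j, IsBasicQSet n m q (H i j))
    (hV : {x | MvPolynomial.eval x p = 0} = ⋃ i, ⋂ j, H i j) :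
    ∃ (s : ℕ) (W : Fin s → Set (Fin n → ℂ)),
      (∀ t, IsBasicQSet n m q (W t)) ∧
      {x | MvPolynomial.eval x p = 0} = ⋃ t, W t := by
  classical
  have hp0 : p ≠ 0 := by
    intro h; rw [h] at hp; simp at hp
  -- all rows are nonempty
  have hr : ∀ i, 0 < r i := by
    by_contra hc
    push_neg at hc
    obtain ⟨i, hi⟩ := hc
    have hempty : IsEmpty (Fin (r i)) := by
      rw [Nat.le_zero] at hi
      rw [hi]; exact Fin.isEmpty'
    have huniv : (⋂ j, H i j) = Set.univ := by
      rw [Set.iInter_eq_univ]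
      intro j
      exact hempty.elim j
    have hall : ∀ x, eval x p = 0 := by
      intro x
      have : x ∈ {x | eval x p = 0} := by
        rw [hV]
        exact Set.mem_iUnion.mpr ⟨i, by rw [huniv]; trivial⟩
      exact this
    exact hp0 (MvPolynomial.funext fun x => by rw [hall x, map_zero])
  -- choose one basic polynomial per row
  have hpoly : ∀ i : Fin K, ∃ h : MvPolynomial (Fin n) ℂ,
      Irreducible h ∧ (⋂ j, H i j) ⊆ {x | eval x h = 0} ∧
      IsBasicQSet n m q {x | eval x h = 0} := by
    intro i
    set j0 : Fin (r i) := ⟨0, hr i⟩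
    have hsub0 : (⋂ j, H i j) ⊆ H i j0 := Set.iInter_subset _ j0
    rcases hH i j0 with ⟨a, ha⟩ | ⟨a, b, hab, ha⟩ | ⟨a, b, hab, ha⟩ | ⟨l, ha⟩
    · refine ⟨X a, (prime_X_mv a).irreducible, ?_, ?_⟩
      · intro x hx
        have := hsub0 hx
        rw [ha] at this
        simpa [eval_X] using this
      · exact Or.inl ⟨a, by ext x; simp [eval_X]⟩
    · refine ⟨X a + X b, (prime_X_add_X hab).irreducible, ?_, ?_⟩
      · intro x hx
        have := hsub0 hx
        rw [ha] at this
        simpa using this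
      · exact Or.inr (Or.inl ⟨a, b, hab, by ext x; simp⟩)
    · refine ⟨X a - X b, (prime_X_sub_X hab).irreducible, ?_, ?_⟩
      · intro x hx
        have := hsub0 hx
        rw [ha] at this
        simpa using this
      · exact Or.inr (Or.inr (Or.inl ⟨a, b, hab, by ext x; simp⟩))
    · refine ⟨q l, (hq l).2, ?_, ?_⟩
      · intro x hx
        have := hsub0 hx
        rw [ha] at this
        exact this
      · exact Or.inr (Or.inr (Or.inr ⟨l, rfl⟩))
  choose h hirr hsubh hbasic using hpoly
  -- the product polynomial
  set G : MvPolynomial (Fin n) ℂ := ∏ i : Fin K, h i with hG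
  have hVG : {x | eval x p = 0} ⊆ {x : Fin n → ℂ | eval x G = 0} := by
    intro x hx
    rw [hV] at hx
    obtain ⟨i, hi⟩ := Set.mem_iUnion.mp hx
    have : eval x (h i) = 0 := hsubh i hi
    show eval x G = 0
    rw [hG, map_prod]
    exact Finset.prod_eq_zero (Finset.mem_univ i) this
  -- factor p
  set F : Multiset (MvPolynomial (Fin n) ℂ) := UniqueFactorizationMonoid.factors p with hF
  have hFirr : ∀ f ∈ F, Irreducible f := fun f hf =>
    UniqueFactorizationMonoid.irreducible_of_factor f hf
  have hFdvd : ∀ f ∈ F, f ∣ p := fun f hf =>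
    UniqueFactorizationMonoid.dvd_of_mem_factors hf
  -- the key covering
  have hcover : {x | eval x p = 0} = ⋃ f ∈ F.toFinset, {x : Fin n → ℂ | eval x f = 0} := by
    ext x
    simp only [Set.mem_setOf_eq, Set.mem_iUnion, Multiset.mem_toFinset]
    constructor
    · intro hx
      obtain ⟨u, hu⟩ := (UniqueFactorizationMonoid.factors_prod hp0).symm
      -- (factors_prod hp0) : Associated F.prod p, symm: Associated p F.prod so ∃ u, p * u = F.prod
      have hprod : eval x F.prod = 0 := by
        rw [← hu]
        simp [hx]
      rw [map_multiset_prod] at hprod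
      rw [Multiset.prod_eq_zero_iff] at hprod
      obtain ⟨f, hfF, hf0⟩ := Multiset.mem_map.mp hprod
      exact ⟨f, hfF, hf0⟩
    · rintro ⟨f, hfF, hf0⟩
      obtain ⟨c, hc⟩ := hFdvd f hfF
      rw [hc, map_mul, hf0, zero_mul]
  -- each factor's zero set is basic
  have hfbasic : ∀ f ∈ F, IsBasicQSet n m q {x : Fin n → ℂ | eval x f = 0} := by
    intro f hf
    have hfprime : Prime f := UniqueFactorizationMonoid.irreducible_iff_prime.mp (hFirr f hf)
    have hsubp : {x : Fin n → ℂ | eval x f = 0} ⊆ {x | eval x p = 0} := by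
      intro x hx
      obtain ⟨c, hc⟩ := hFdvd f hf
      show eval x p = 0
      rw [hc, map_mul]
      rw [Set.mem_setOf_eq] at hx
      rw [hx, zero_mul]
    have hdvdG : f ∣ G := dvd_of_zeroset_subset hfprime (hsubp.trans hVG)
    obtain ⟨i, _, hdvd⟩ := hfprime.exists_mem_finset_dvd hdvdG
    have heq : {x : Fin n → ℂ | eval x f = 0} = {x | eval x (h i) = 0} :=
      zeroset_eq_of_dvd_irred (hirr i) (hFirr f hf).not_isUnit hdvd
    rw [heq]
    exact hbasic i
  -- index the factors by a Fin type
  set L : List (MvPolynomial (Fin n) ℂ) := F.toList with hL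
  refine ⟨L.length, fun t => {x | eval x (L.get t) = 0}, ?_, ?_⟩
  · intro t
    exact hfbasic _ (by rw [← Multiset.mem_toList]; exact List.get_mem L t)
  · rw [hcover]
    ext x
    simp only [Set.mem_iUnion, Multiset.mem_toFinset, Set.mem_setOf_eq]
    constructor
    · rintro ⟨f, hfF, hf0⟩
      rw [← Multiset.mem_toList, ← hL] at hfF
      obtain ⟨t, ht⟩ := List.mem_iff_get.mp hfF
      exact ⟨t, by rw [ht]; exact hf0⟩
    · rintro ⟨t, ht⟩
      exact ⟨L.get t, by rw [← Multiset.mem_toList]; exact List.get_mem L t, ht⟩
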